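/- For every positive integer d and finite alphabet Σ there exists p ∈ (0,1), and for every α ∈ (0,1) there is a constant K (depending only on d and α), such that the following holds for all positive integers n, k, t with n ≥ k ≥ t ≥ max{2d, αk} and k ≤ pn. Suppose an ensemble of local functions {f_S : binom(S,d) → Σ | S ∈ binom([n],k)} and a global function F : binom([n],d) → Σ satisfy Pr_{(S₁,S₂)∼ν_{n,k,t}}[f_{S₁}|_{S₁∩S₂} ≠ f_{S₂}|_{S₁∩S₂}] = ε and Pr_{S∼ν_{n,k}}[f_S ≠ F|_S] = δ. Then every function G : binom([n],d) → Σ defined by plurality decoding — i.e. for each T ∈ binom([n],d), G(T) is a most popular value of f_S(T) over k-element sets S ⊇ T, with ties broken arbitrarily — satisfies Pr_{S∼ν_{n,k}}[f_S ≠ G|_S] ≤ K·(ε + δ). -/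

import Mathlib

open Finset

/-- The family of `k`-element subsets of `[n]` (modeled as `Fin n`);
`ν_{n,k}` is the uniform distribution on this family. -/
def ksets (n k : ℕ) : Finset (Finset (Fin n)) := Finset.univ.powersetCard k

/-- The support of `ν_{n,k,t}`: ordered pairs of `k`-element subsets of `[n]`
with intersection of size exactly `t` (the distribution is uniform on this set). -/
def nupairs (n k t : ℕ) : Finset (Finset (Fin n) × Finset (Fin n)) :=
  ((ksets n k) ×ˢ (ksets n k)).filter (fun P => (P.1 ∩ P.2).card = t)


def kcol (n k : ℕ) (V : Finset (Fin n)) : Finset (Finset (Fin n)) :=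
  (ksets n k).filter (fun S => V ⊆ S)

lemma col_card {n k : ℕ} (V : Finset (Fin n)) (hV : V.card ≤ k) :
    (kcol n k V).card = (n - V.card).choose (k - V.card) := by
  rw [kcol]
  have hcompl : (Finset.univ \ V).card = n - V.card := by
    rw [Finset.card_sdiff_of_subset (Finset.subset_univ V), Finset.card_univ, Fintype.card_fin]
  have hpc := Finset.card_powersetCard (k - V.card) (Finset.univ \ V)
  rw [hcompl] at hpc
  rw [← hpc]
  apply Finset.card_bij (fun S _ => S \ V)
  · intro S hS
    simp only [ksets, Finset.mem_filter, Finset.mem_powersetCard] at hS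
    obtain ⟨⟨-, hcard⟩, hVS⟩ := hS
    rw [Finset.mem_powersetCard]
    exact ⟨Finset.sdiff_subset_sdiff (Finset.subset_univ S) le_rfl,
      by rw [Finset.card_sdiff_of_subset hVS, hcard]⟩
  · intro S1 h1 S2 h2 heq
    simp only [ksets, Finset.mem_filter, Finset.mem_powersetCard] at h1 h2
    have e1 := Finset.sdiff_union_of_subset h1.2
    have e2 := Finset.sdiff_union_of_subset h2.2
    rw [← e1, ← e2, heq]
  · intro u hu
    rw [Finset.mem_powersetCard] at hu
    obtain ⟨husub, hucard⟩ := hu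
    have hdisj : Disjoint u V := (Finset.subset_sdiff.mp husub).2
    refine ⟨u ∪ V, ?_, ?_⟩
    · simp only [ksets, Finset.mem_filter, Finset.mem_powersetCard]
      refine ⟨⟨Finset.subset_univ _, ?_⟩, Finset.subset_union_right⟩
      rw [Finset.card_union_of_disjoint hdisj, hucard]
      omega
    · rw [Finset.union_sdiff_right]
      exact Finset.sdiff_eq_self_of_disjoint hdisj

lemma ratio_step {n k d j : ℕ} (hj : j + 1 ≤ d) (hdk : 2*d ≤ k) (hkn : 2*k ≤ n) :
    (n-j).choose (k-j) * (n-(2*d-j)).choose (k-(2*d-j)) ≤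
      2 * ((n-(j+1)).choose (k-(j+1)) * (n-(2*d-(j+1))).choose (k-(2*d-(j+1)))) := by
  set u := 2*d - (j+1) with hu
  have hd1 : 1 ≤ d := le_trans (by omega) hj
  have hjd : j < d := hj
  have hkd : d ≤ k := by omega
  have hnd : 2*d ≤ n := by omega
  -- identities
  have Ij : (n-j) * (n-(j+1)).choose (k-(j+1)) = (n-j).choose (k-j) * (k-j) := by
    have : (n-j-1).succ * (n-j-1).choose (k-j-1) = (n-j-1).succ.choose (k-j-1).succ * (k-j-1).succ :=
      Nat.add_one_mul_choose_eq (n-j-1) (k-j-1)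
    have e1 : (n-j-1).succ = n - j := by omega
    have e2 : (k-j-1).succ = k - j := by omega
    rw [e1, e2] at this
    have e3 : n - j - 1 = n - (j+1) := by omega
    have e4 : k - j - 1 = k - (j+1) := by omega
    rw [e3, e4] at this
    exact this
  have Iu : (n-u) * (n-(u+1)).choose (k-(u+1)) = (n-u).choose (k-u) * (k-u) := by
    have : (n-u-1).succ * (n-u-1).choose (k-u-1) = (n-u-1).succ.choose (k-u-1).succ * (k-u-1).succ :=
      Nat.add_one_mul_choose_eq (n-u-1) (k-u-1)
    have e1 : (n-u-1).succ = n - u := by omega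
    have e2 : (k-u-1).succ = k - u := by omega
    rw [e1, e2] at this
    have e3 : n - u - 1 = n - (u+1) := by omega
    have e4 : k - u - 1 = k - (u+1) := by omega
    rw [e3, e4] at this
    exact this
  have hu1 : u + 1 = 2*d - j := by omega
  rw [← hu1]
  -- numeric inequality
  have hnum : (n-j) * (k-u) ≤ 2 * ((k-j) * (n-u)) := by
    have h1 : k - u ≤ k - j := by omega
    have h2 : n - j ≤ 2 * (n-u) := by omega
    calc (n-j) * (k-u) ≤ (2*(n-u)) * (k-j) := Nat.mul_le_mul h2 h1
    _ = 2 * ((k-j)*(n-u)) := by ring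
  -- multiply target by (k-j)*(n-u)
  have key : ((k-j)*(n-u)) * ((n-j).choose (k-j) * (n-(u+1)).choose (k-(u+1))) ≤
      ((k-j)*(n-u)) * (2 * ((n-(j+1)).choose (k-(j+1)) * (n-u).choose (k-u))) := by
    have lhs_eq : ((k-j)*(n-u)) * ((n-j).choose (k-j) * (n-(u+1)).choose (k-(u+1))) =
        ((n-j) * (k-u)) * ((n-(j+1)).choose (k-(j+1)) * (n-u).choose (k-u)) := by
      calc ((k-j)*(n-u)) * ((n-j).choose (k-j) * (n-(u+1)).choose (k-(u+1)))
          = ((n-j).choose (k-j) * (k-j)) * ((n-u) * (n-(u+1)).choose (k-(u+1))) := by ring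
        _ = ((n-j) * (n-(j+1)).choose (k-(j+1))) * ((n-u).choose (k-u) * (k-u)) := by
            rw [← Ij, Iu]
        _ = ((n-j) * (k-u)) * ((n-(j+1)).choose (k-(j+1)) * (n-u).choose (k-u)) := by ring
    rw [lhs_eq]
    calc ((n-j) * (k-u)) * ((n-(j+1)).choose (k-(j+1)) * (n-u).choose (k-u))
        ≤ (2 * ((k-j) * (n-u))) * ((n-(j+1)).choose (k-(j+1)) * (n-u).choose (k-u)) :=
          Nat.mul_le_mul_right _ hnum
      _ = ((k-j)*(n-u)) * (2 * ((n-(j+1)).choose (k-(j+1)) * (n-u).choose (k-u))) := by ring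
  have hpos : 0 < (k-j)*(n-u) := by
    have h1 : 0 < k - j := by omega
    have h2 : 0 < n - u := by omega
    exact Nat.mul_pos h1 h2
  exact Nat.le_of_mul_le_mul_left key hpos

lemma ratio_lemma {n k d : ℕ} (hdk : 2*d ≤ k) (hkn : 2*k ≤ n) :
    ∀ m j, j + m = d →
      (n-j).choose (k-j) * (n-(2*d-j)).choose (k-(2*d-j)) ≤
        2^m * ((n-d).choose (k-d) * (n-d).choose (k-d)) := by
  intro m
  induction m with
  | zero =>
    intro j hj
    have hjd : j = d := by omega
    rw [hjd]
    have h2 : 2*d - d = d := by omega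
    rw [h2]
    simp
  | succ m ih =>
    intro j hj
    have h1 : j + 1 ≤ d := by omega
    calc (n-j).choose (k-j) * (n-(2*d-j)).choose (k-(2*d-j))
        ≤ 2 * ((n-(j+1)).choose (k-(j+1)) * (n-(2*d-(j+1))).choose (k-(2*d-(j+1)))) :=
          ratio_step h1 hdk hkn
      _ ≤ 2 * (2^m * ((n-d).choose (k-d) * (n-d).choose (k-d))) := by
          have := ih (j+1) (by omega)
          omega
      _ = 2^(m+1) * ((n-d).choose (k-d) * (n-d).choose (k-d)) := by ring

lemma card_finIval (n a b : ℕ) (hb : b ≤ n) :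
    ((Finset.univ : Finset (Fin n)).filter (fun i => a ≤ i.val ∧ i.val < b)).card = b - a := by
  rw [← Nat.card_Ico a b]
  apply Finset.card_bij (fun i _ => i.val)
  · intro i hi
    rw [Finset.mem_filter] at hi
    exact Finset.mem_Ico.mpr hi.2
  · intro i _ j _ h
    exact Fin.ext h
  · intro j hj
    rw [Finset.mem_Ico] at hj
    exact ⟨⟨j, lt_of_lt_of_le hj.2 hb⟩,
      Finset.mem_filter.mpr ⟨Finset.mem_univ _, hj.1, hj.2⟩, rfl⟩


lemma nupairs_nonempty {n k t : ℕ} (htk : t ≤ k) (h2k : 2*k ≤ n) :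
    (nupairs n k t).Nonempty := by
  refine ⟨((Finset.univ : Finset (Fin n)).filter (fun i => 0 ≤ i.val ∧ i.val < k),
    (Finset.univ : Finset (Fin n)).filter (fun i => k - t ≤ i.val ∧ i.val < 2*k - t)), ?_⟩
  rw [nupairs, Finset.mem_filter, Finset.mem_product]
  have hc1 : ((Finset.univ : Finset (Fin n)).filter
      (fun i => 0 ≤ i.val ∧ i.val < k)).card = k := by
    rw [card_finIval n 0 k (by omega)]
    omega
  have hc2 : ((Finset.univ : Finset (Fin n)).filter
      (fun i => k - t ≤ i.val ∧ i.val < 2*k - t)).card = k := by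
    rw [card_finIval n (k-t) (2*k-t) (by omega)]
    omega
  refine ⟨⟨?_, ?_⟩, ?_⟩
  · exact Finset.mem_powersetCard.mpr ⟨Finset.subset_univ _, hc1⟩
  · exact Finset.mem_powersetCard.mpr ⟨Finset.subset_univ _, hc2⟩
  · have hint : ((Finset.univ : Finset (Fin n)).filter (fun i => 0 ≤ i.val ∧ i.val < k)) ∩
        ((Finset.univ : Finset (Fin n)).filter (fun i => k - t ≤ i.val ∧ i.val < 2*k - t)) =
        (Finset.univ : Finset (Fin n)).filter (fun i => k - t ≤ i.val ∧ i.val < k) := by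
      ext i
      simp only [Finset.mem_inter, Finset.mem_filter, Finset.mem_univ, true_and]
      omega
    simp only [hint]
    rw [card_finIval n (k-t) k (by omega)]
    omega

lemma core {n k d : ℕ} (hd : 0 < d) (hdk : 2*d ≤ k) (hkn : 2*k ≤ n)
    (A M : Finset (Finset (Fin n)))
    (hM : ∀ T ∈ M, T.card = d)
    (hMA : ∀ T ∈ M, (n-d).choose (k-d) ≤ 2 * (A ∩ kcol n k T).card) :
    ((ksets n k).filter (fun S => ∃ T ∈ M, T ⊆ S)).card ≤ 4 * (1 + 2^(3*d+2)) * A.card := by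
  set N := (n-d).choose (k-d) with hNdef
  have hkn' : k ≤ n := by omega
  have hN : 0 < N := Nat.choose_pos (by omega)
  -- greedy family
  set Cand := M.powerset.filter
    (fun M' => N * M'.card ≤ 4 * (A ∩ M'.biUnion (kcol n k)).card) with hCdef
  have hCne : Cand.Nonempty := by
    refine ⟨∅, ?_⟩
    simp [Cand]
  obtain ⟨M', hM'c, hmax⟩ := Finset.exists_max_image Cand Finset.card hCne
  have hM'sub : M' ⊆ M := Finset.mem_powerset.mp (Finset.mem_filter.mp hM'c).1
  have hinv : N * M'.card ≤ 4 * (A ∩ M'.biUnion (kcol n k)).card :=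
    (Finset.mem_filter.mp hM'c).2
  -- terminal property
  have hterm : ∀ T ∈ M, 4 * ((A ∩ kcol n k T) \ M'.biUnion (kcol n k)).card < N := by
    by_contra hcon
    push_neg at hcon
    obtain ⟨T, hTM, hge⟩ := hcon
    have hTnot : T ∉ M' := by
      intro hTin
      have hsub : (A ∩ kcol n k T) \ M'.biUnion (kcol n k) = ∅ := by
        rw [Finset.sdiff_eq_empty_iff_subset]
        intro S hS
        exact Finset.mem_biUnion.mpr ⟨T, hTin, (Finset.mem_inter.mp hS).2⟩
      rw [hsub] at hge
      simp at hge
      omega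
    have hins : insert T M' ∈ Cand := by
      refine Finset.mem_filter.mpr ⟨Finset.mem_powerset.mpr
        (Finset.insert_subset hTM hM'sub), ?_⟩
      rw [Finset.card_insert_of_notMem hTnot, Finset.biUnion_insert]
      have hdisj : Disjoint (A ∩ M'.biUnion (kcol n k))
          ((A ∩ kcol n k T) \ M'.biUnion (kcol n k)) :=
        Finset.disjoint_sdiff.mono_left Finset.inter_subset_right
      have hsub2 : (A ∩ M'.biUnion (kcol n k)) ∪
          ((A ∩ kcol n k T) \ M'.biUnion (kcol n k)) ⊆
          A ∩ (kcol n k T ∪ M'.biUnion (kcol n k)) := by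
        intro S hS
        rw [Finset.mem_union] at hS
        rcases hS with h | h
        · rw [Finset.mem_inter] at h ⊢
          exact ⟨h.1, Finset.mem_union_right _ h.2⟩
        · rw [Finset.mem_sdiff, Finset.mem_inter] at h
          rw [Finset.mem_inter]
          exact ⟨h.1.1, Finset.mem_union_left _ h.1.2⟩
      calc N * (M'.card + 1) = N * M'.card + N := by ring
        _ ≤ 4 * (A ∩ M'.biUnion (kcol n k)).card +
            4 * ((A ∩ kcol n k T) \ M'.biUnion (kcol n k)).card := add_le_add hinv hge
        _ = 4 * ((A ∩ M'.biUnion (kcol n k)).card +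
            ((A ∩ kcol n k T) \ M'.biUnion (kcol n k)).card) := by ring
        _ = 4 * ((A ∩ M'.biUnion (kcol n k)) ∪
            ((A ∩ kcol n k T) \ M'.biUnion (kcol n k))).card := by
            rw [Finset.card_union_of_disjoint hdisj]
        _ ≤ 4 * (A ∩ (kcol n k T ∪ M'.biUnion (kcol n k))).card := by
            have := Finset.card_le_card hsub2
            omega
    have hlt := hmax _ hins
    rw [Finset.card_insert_of_notMem hTnot] at hlt
    omega
  -- per-T extraction of a popular core J
  have hJT : ∀ T ∈ M, T ∉ M' → ∃ J, J ⊆ T ∧ J.card < d ∧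
      N < 2^(d+2) * ((M'.filter (fun T' => J ⊆ T')).card *
        (n - (2*d - J.card)).choose (k - (2*d - J.card))) := by
    intro T hTM hTn
    have hTcard : T.card = d := hM T hTM
    have h1 : N ≤ 2 * (A ∩ kcol n k T).card := hMA T hTM
    have h2 : 4 * ((A ∩ kcol n k T) \ M'.biUnion (kcol n k)).card < N := hterm T hTM
    have h3 : ((A ∩ kcol n k T) ∩ M'.biUnion (kcol n k)).card +
        ((A ∩ kcol n k T) \ M'.biUnion (kcol n k)).card = (A ∩ kcol n k T).card :=
      Finset.card_inter_add_card_sdiff _ _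
    have h4 : N < 4 * ((kcol n k T) ∩ M'.biUnion (kcol n k)).card := by
      have hsub : (A ∩ kcol n k T) ∩ M'.biUnion (kcol n k) ⊆
          (kcol n k T) ∩ M'.biUnion (kcol n k) :=
        Finset.inter_subset_inter Finset.inter_subset_right le_rfl
      have := Finset.card_le_card hsub
      omega
    have h5 : (kcol n k T) ∩ M'.biUnion (kcol n k) ⊆
        M'.biUnion (fun T' => kcol n k T ∩ kcol n k T') := by
      intro S hS
      rw [Finset.mem_inter, Finset.mem_biUnion] at hS
      obtain ⟨hST, T', hT', hST'⟩ := hS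
      exact Finset.mem_biUnion.mpr ⟨T', hT', Finset.mem_inter.mpr ⟨hST, hST'⟩⟩
    have h6 : N < 4 * ∑ T' ∈ M', (kcol n k T ∩ kcol n k T').card := by
      have ha := Finset.card_le_card h5
      have hb := Finset.card_biUnion_le (s := M') (t := fun T' => kcol n k T ∩ kcol n k T')
      omega
    -- each intersection is a column of the union
    have h7 : ∀ T' ∈ M', (kcol n k T ∩ kcol n k T').card =
        (n - (2*d - (T ∩ T').card)).choose (k - (2*d - (T ∩ T').card)) := by
      intro T' hT'
      have hT'card : T'.card = d := hM T' (hM'sub hT')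
      have hcc : kcol n k T ∩ kcol n k T' = kcol n k (T ∪ T') := by
        ext S
        simp only [kcol, Finset.mem_inter, Finset.mem_filter, Finset.union_subset_iff]
        tauto
      have hcu : (T ∪ T').card = 2*d - (T ∩ T').card := by
        have := Finset.card_union_add_card_inter T T'
        rw [hTcard, hT'card] at this
        omega
      rw [hcc, col_card (T ∪ T') (by rw [hcu]; omega), hcu]
    have h8 : N < 4 * ∑ T' ∈ M',
        (n - (2*d - (T ∩ T').card)).choose (k - (2*d - (T ∩ T').card)) := by
      rw [Finset.sum_congr rfl h7] at h6
      exact h6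
    -- fiberwise over J = T ∩ T'
    have h9 := Finset.sum_fiberwise_of_maps_to (s := M') (t := T.powerset)
      (g := fun T' => T ∩ T')
      (fun T' _ => Finset.mem_powerset.mpr Finset.inter_subset_left)
      (fun T' => (n - (2*d - (T ∩ T').card)).choose (k - (2*d - (T ∩ T').card)))
    by_contra hno
    push_neg at hno
    -- bound each fiber
    have h10 : ∀ J ∈ T.powerset,
        2^(d+2) * (∑ T' ∈ M'.filter (fun T' => T ∩ T' = J),
          (n - (2*d - (T ∩ T').card)).choose (k - (2*d - (T ∩ T').card))) ≤ N := by
      intro J hJ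
      have hJT' : J ⊆ T := Finset.mem_powerset.mp hJ
      have hsum : ∑ T' ∈ M'.filter (fun T' => T ∩ T' = J),
          (n - (2*d - (T ∩ T').card)).choose (k - (2*d - (T ∩ T').card)) =
          (M'.filter (fun T' => T ∩ T' = J)).card *
          ((n - (2*d - J.card)).choose (k - (2*d - J.card))) := by
        rw [Finset.sum_congr rfl (fun T' hT' => by
          rw [(Finset.mem_filter.mp hT').2]), Finset.sum_const, smul_eq_mul]
      rw [hsum]
      have hfib_le : (M'.filter (fun T' => T ∩ T' = J)).card ≤
          (M'.filter (fun T' => J ⊆ T')).card := by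
        apply Finset.card_le_card
        intro T' hT'
        rw [Finset.mem_filter] at hT' ⊢
        exact ⟨hT'.1, hT'.2 ▸ Finset.inter_subset_right⟩
      rcases lt_or_eq_of_le (Finset.card_le_card hJT') with hlt | heq
      · -- J.card < d
        have := hno J hJT' (by omega)
        calc 2^(d+2) * ((M'.filter (fun T' => T ∩ T' = J)).card *
              ((n - (2*d - J.card)).choose (k - (2*d - J.card))))
            ≤ 2^(d+2) * ((M'.filter (fun T' => J ⊆ T')).card *
              ((n - (2*d - J.card)).choose (k - (2*d - J.card)))) := by
              apply Nat.mul_le_mul_left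
              exact Nat.mul_le_mul_right _ hfib_le
          _ ≤ N := this
      · -- J = T, fiber is empty
        have hJeqT : J = T := Finset.eq_of_subset_of_card_le hJT' (by omega)
        have hfe : M'.filter (fun T' => T ∩ T' = J) = ∅ := by
          rw [Finset.filter_eq_empty_iff]
          intro T' hT'
          intro heq2
          have hT'card : T'.card = d := hM T' (hM'sub hT')
          have hTT' : T ⊆ T' := by
            rw [hJeqT] at heq2
            have : T ∩ T' = T := heq2
            exact (Finset.inter_eq_left.mp this)
          have : T = T' := Finset.eq_of_subset_of_card_le hTT' (by omega)
          exact hTn (this ▸ hT')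
        rw [hfe]
        simp
    -- combine: contradiction
    have h11 : 2^(d+2) * ∑ J ∈ T.powerset, (∑ T' ∈ M'.filter (fun T' => T ∩ T' = J),
        (n - (2*d - (T ∩ T').card)).choose (k - (2*d - (T ∩ T').card))) ≤ 2^d * N := by
      rw [Finset.mul_sum]
      calc ∑ J ∈ T.powerset, 2^(d+2) * (∑ T' ∈ M'.filter (fun T' => T ∩ T' = J),
            (n - (2*d - (T ∩ T').card)).choose (k - (2*d - (T ∩ T').card)))
          ≤ T.powerset.card • N := Finset.sum_le_card_nsmul _ _ _ h10
        _ = 2^d * N := by rw [Finset.card_powerset, hTcard, smul_eq_mul]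
    rw [h9] at h11
    have hposd : 0 < 2^d := pow_pos (by norm_num) d
    have h12 : 2^d * N < 2^d * (4 * ∑ T' ∈ M',
        (n - (2*d - (T ∩ T').card)).choose (k - (2*d - (T ∩ T').card))) :=
      (Nat.mul_lt_mul_left hposd).mpr h8
    have h13 : 2^d * (4 * ∑ T' ∈ M',
        (n - (2*d - (T ∩ T').card)).choose (k - (2*d - (T ∩ T').card))) =
        2^(d+2) * ∑ T' ∈ M',
        (n - (2*d - (T ∩ T').card)).choose (k - (2*d - (T ∩ T').card)) := by
      ring
    rw [h13] at h12
    exact absurd (lt_of_lt_of_le h12 h11) (lt_irrefl _)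
  -- the family of popular cores
  set Kset := (Finset.univ : Finset (Finset (Fin n))).filter
    (fun J => J.card < d ∧ N < 2^(d+2) * ((M'.filter (fun T' => J ⊆ T')).card *
      (n - (2*d - J.card)).choose (k - (2*d - J.card)))) with hKdef
  have hUsub : (ksets n k).filter (fun S => ∃ T ∈ M, T ⊆ S) ⊆
      M'.biUnion (kcol n k) ∪ Kset.biUnion (kcol n k) := by
    intro S hS
    rw [Finset.mem_filter] at hS
    obtain ⟨hSk, T, hTM, hTS⟩ := hS
    by_cases hT' : T ∈ M'
    · exact Finset.mem_union_left _ (Finset.mem_biUnion.mpr ⟨T, hT',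
        Finset.mem_filter.mpr ⟨hSk, hTS⟩⟩)
    · obtain ⟨J, hJsub, hJcard, hJineq⟩ := hJT T hTM hT'
      refine Finset.mem_union_right _ (Finset.mem_biUnion.mpr ⟨J, ?_,
        Finset.mem_filter.mpr ⟨hSk, hJsub.trans hTS⟩⟩)
      exact Finset.mem_filter.mpr ⟨Finset.mem_univ _, hJcard, hJineq⟩
  have hU1 : (M'.biUnion (kcol n k)).card ≤ M'.card * N := by
    calc (M'.biUnion (kcol n k)).card ≤ ∑ T' ∈ M', (kcol n k T').card :=
        Finset.card_biUnion_le
      _ = ∑ T' ∈ M', N := Finset.sum_congr rfl (fun T' hT' => by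
          rw [col_card T' (by have := hM T' (hM'sub hT'); omega), hM T' (hM'sub hT')])
      _ = M'.card * N := by rw [Finset.sum_const, smul_eq_mul]
  have hpp : (2:ℕ)^(d+2) * 2^d = 2^(2*d+2) := by
    rw [← pow_add]; congr 1; omega
  have hpp2 : (2:ℕ)^(2*d+2) * 2^d = 2^(3*d+2) := by
    rw [← pow_add]; congr 1; omega
  have hKbound : ∀ J ∈ Kset, (kcol n k J).card ≤
      (2^(2*d+2) * N) * (M'.filter (fun T' => J ⊆ T')).card := by
    intro J hJ
    rw [Finset.mem_filter] at hJ
    obtain ⟨-, hJcard, hJineq⟩ := hJ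
    have hcolJ : (kcol n k J).card = (n - J.card).choose (k - J.card) :=
      col_card J (by omega)
    rw [hcolJ]
    have hr : (n - J.card).choose (k - J.card) *
        (n - (2*d - J.card)).choose (k - (2*d - J.card)) ≤ 2^(d - J.card) * (N * N) :=
      ratio_lemma hdk hkn (d - J.card) J.card (by omega)
    have hr2 : (n - J.card).choose (k - J.card) *
        (n - (2*d - J.card)).choose (k - (2*d - J.card)) ≤ 2^d * (N * N) :=
      le_trans hr (Nat.mul_le_mul_right _ (Nat.pow_le_pow_right (by norm_num) (by omega)))
    have hchain : N * (n - J.card).choose (k - J.card) ≤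
        N * ((2^(2*d+2) * N) * (M'.filter (fun T' => J ⊆ T')).card) := by
      calc N * (n - J.card).choose (k - J.card)
          ≤ (2^(d+2) * ((M'.filter (fun T' => J ⊆ T')).card *
              (n - (2*d - J.card)).choose (k - (2*d - J.card)))) *
              (n - J.card).choose (k - J.card) :=
            Nat.mul_le_mul_right _ (le_of_lt hJineq)
        _ = 2^(d+2) * (M'.filter (fun T' => J ⊆ T')).card *
              ((n - J.card).choose (k - J.card) *
                (n - (2*d - J.card)).choose (k - (2*d - J.card))) := by ring
        _ ≤ 2^(d+2) * (M'.filter (fun T' => J ⊆ T')).card * (2^d * (N * N)) :=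
            Nat.mul_le_mul_left _ hr2
        _ = (2^(d+2) * 2^d) * ((M'.filter (fun T' => J ⊆ T')).card * (N * N)) := by ring
        _ = 2^(2*d+2) * ((M'.filter (fun T' => J ⊆ T')).card * (N * N)) := by rw [hpp]
        _ = N * ((2^(2*d+2) * N) * (M'.filter (fun T' => J ⊆ T')).card) := by ring
    exact Nat.le_of_mul_le_mul_left hchain hN
  have hdegsum : ∑ J ∈ Kset, (M'.filter (fun T' => J ⊆ T')).card ≤ M'.card * 2^d := by
    have hswap : ∑ J ∈ Kset, (M'.filter (fun T' => J ⊆ T')).card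
        = ∑ T' ∈ M', (Kset.filter (fun J => J ⊆ T')).card := by
      simp_rw [Finset.card_filter]
      exact Finset.sum_comm
    rw [hswap]
    calc ∑ T' ∈ M', (Kset.filter (fun J => J ⊆ T')).card
        ≤ ∑ T' ∈ M', 2^d := Finset.sum_le_sum (fun T' hT' => by
          have hsub : Kset.filter (fun J => J ⊆ T') ⊆ T'.powerset := fun J hJ =>
            Finset.mem_powerset.mpr (Finset.mem_filter.mp hJ).2
          have h := Finset.card_le_card hsub
          rwa [Finset.card_powerset, hM T' (hM'sub hT')] at h)
      _ = M'.card * 2^d := by rw [Finset.sum_const, smul_eq_mul]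
  have hU2 : (Kset.biUnion (kcol n k)).card ≤ (2^(2*d+2) * N) * (M'.card * 2^d) := by
    calc (Kset.biUnion (kcol n k)).card ≤ ∑ J ∈ Kset, (kcol n k J).card :=
        Finset.card_biUnion_le
      _ ≤ ∑ J ∈ Kset, (2^(2*d+2) * N) * (M'.filter (fun T' => J ⊆ T')).card :=
        Finset.sum_le_sum hKbound
      _ = (2^(2*d+2) * N) * ∑ J ∈ Kset, (M'.filter (fun T' => J ⊆ T')).card := by
        rw [Finset.mul_sum]
      _ ≤ (2^(2*d+2) * N) * (M'.card * 2^d) := Nat.mul_le_mul_left _ hdegsum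
  have hNM' : N * M'.card ≤ 4 * A.card := by
    have h : (A ∩ M'.biUnion (kcol n k)).card ≤ A.card :=
      Finset.card_le_card Finset.inter_subset_left
    omega
  calc ((ksets n k).filter (fun S => ∃ T ∈ M, T ⊆ S)).card
      ≤ (M'.biUnion (kcol n k) ∪ Kset.biUnion (kcol n k)).card :=
        Finset.card_le_card hUsub
    _ ≤ (M'.biUnion (kcol n k)).card + (Kset.biUnion (kcol n k)).card :=
        Finset.card_union_le _ _
    _ ≤ M'.card * N + (2^(2*d+2) * N) * (M'.card * 2^d) := add_le_add hU1 hU2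
    _ = (N * M'.card) * (1 + 2^(2*d+2) * 2^d) := by ring
    _ = (N * M'.card) * (1 + 2^(3*d+2)) := by rw [hpp2]
    _ ≤ (4 * A.card) * (1 + 2^(3*d+2)) := Nat.mul_le_mul_right _ hNM'
    _ = 4 * (1 + 2^(3*d+2)) * A.card := by ring


/-- Majority (plurality) decoding works for agreement testing.  Local functions
`f_S : binom(S,d) → Σ` are modeled as total functions on `Finset (Fin n)`, evaluated
only at `d`-element subsets.  The constant `K` (as a function of `α`) depends only on
`d` and `α`; the constant `p` depends only on `d` and the alphabet `Γ`.
`G` is any plurality-decoded function: for each `d`-set `T`, `G T` is a most popular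
value of `f S T` over `k`-sets `S ⊇ T`, ties broken arbitrarily. -/
theorem stmt19 :
    ∀ (d : ℕ), 0 < d →
      ∃ K : ℝ → ℝ,
        ∀ (Γ : Type) [Fintype Γ] [DecidableEq Γ],
          ∃ p : ℝ, p ∈ Set.Ioo (0:ℝ) 1 ∧
            ∀ α : ℝ, α ∈ Set.Ioo (0:ℝ) 1 →
              ∀ (n k t : ℕ), t ≤ k → k ≤ n → 2 * d ≤ t →
                α * (k : ℝ) ≤ (t : ℝ) → (k : ℝ) ≤ p * (n : ℝ) →
                ∀ (f : Finset (Fin n) → Finset (Fin n) → Γ)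
                  (F : Finset (Fin n) → Γ) (ε δ : ℝ),
                  (((nupairs n k t).filter
                      (fun P => ¬ ∀ T ⊆ P.1 ∩ P.2, T.card = d →
                        f P.1 T = f P.2 T)).card : ℝ) =
                    ε * ((nupairs n k t).card : ℝ) →
                  (((ksets n k).filter
                      (fun S => ¬ ∀ T ⊆ S, T.card = d → f S T = F T)).card : ℝ) =
                    δ * ((ksets n k).card : ℝ) →
                  ∀ G : Finset (Fin n) → Γ,
                    (∀ T : Finset (Fin n), T.card = d → ∀ σ : Γ,
                      ((ksets n k).filter (fun S => T ⊆ S ∧ f S T = σ)).card ≤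
                        ((ksets n k).filter (fun S => T ⊆ S ∧ f S T = G T)).card) →
                    (((ksets n k).filter
                        (fun S => ¬ ∀ T ⊆ S, T.card = d → f S T = G T)).card : ℝ) ≤
                      K α * (ε + δ) * ((ksets n k).card : ℝ) := by
  intro d hd
  refine ⟨fun _ => ((4 * (1 + 2^(3*d+2)) + 1 : ℕ) : ℝ), ?_⟩
  intro Γ _ _
  refine ⟨1/2, ⟨by norm_num, by norm_num⟩, ?_⟩
  intro α hα n k t htk hkn h2dt hαkt hkpn f F ε δ hε hδ G hG
  have h2kn : 2*k ≤ n := by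
    have h : (2*(k:ℝ)) ≤ (n:ℝ) := by linarith
    exact_mod_cast h
  have h2dk : 2*d ≤ k := le_trans h2dt htk
  have hYpos : (0:ℝ) < ((ksets n k).card : ℝ) := by
    have hne : (ksets n k).Nonempty := by
      refine ⟨(Finset.univ : Finset (Fin n)).filter (fun i => 0 ≤ i.val ∧ i.val < k), ?_⟩
      rw [ksets, Finset.mem_powersetCard]
      refine ⟨Finset.subset_univ _, ?_⟩
      rw [card_finIval n 0 k hkn]
      omega
    exact_mod_cast Finset.card_pos.mpr hne
  have hε0 : 0 ≤ ε := by
    have hPpos : (0:ℝ) < ((nupairs n k t).card : ℝ) := by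
      exact_mod_cast Finset.card_pos.mpr (nupairs_nonempty htk h2kn)
    have hcnn : (0:ℝ) ≤ (((nupairs n k t).filter
        (fun P => ¬ ∀ T ⊆ P.1 ∩ P.2, T.card = d → f P.1 T = f P.2 T)).card : ℝ) := by
      positivity
    rw [hε] at hcnn
    nlinarith
  set Δfin := (ksets n k).filter (fun S => ¬ ∀ T ⊆ S, T.card = d → f S T = F T) with hΔdef
  set M := (Finset.univ.powersetCard d : Finset (Finset (Fin n))).filter
    (fun T => G T ≠ F T) with hMdef
  have hMcards : ∀ T ∈ M, T.card = d := fun T hT =>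
    (Finset.mem_powersetCard.mp (Finset.mem_filter.mp hT).1).2
  have hMA : ∀ T ∈ M, (n-d).choose (k-d) ≤ 2 * (Δfin ∩ kcol n k T).card := by
    intro T hT
    obtain ⟨hTp, hGF⟩ := Finset.mem_filter.mp hT
    have hTcard : T.card = d := (Finset.mem_powersetCard.mp hTp).2
    have hcol : (kcol n k T).card = (n - d).choose (k - d) := by
      rw [col_card T (by omega), hTcard]
    have hsplit := Finset.card_filter_add_card_filter_not
      (s := kcol n k T) (p := fun S => f S T = F T)
    have he1 : (kcol n k T).filter (fun S => f S T = F T) =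
        (ksets n k).filter (fun S => T ⊆ S ∧ f S T = F T) := by
      rw [kcol, Finset.filter_filter]
    have he2 : (kcol n k T).filter (fun S => ¬ (f S T = F T)) =
        (ksets n k).filter (fun S => T ⊆ S ∧ ¬ (f S T = F T)) := by
      rw [kcol, Finset.filter_filter]
    have hle1 : ((ksets n k).filter (fun S => T ⊆ S ∧ f S T = F T)).card ≤
        ((ksets n k).filter (fun S => T ⊆ S ∧ f S T = G T)).card := hG T hTcard (F T)
    have hle2 : (ksets n k).filter (fun S => T ⊆ S ∧ f S T = G T) ⊆
        (ksets n k).filter (fun S => T ⊆ S ∧ ¬ (f S T = F T)) := by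
      intro S hS
      rw [Finset.mem_filter] at hS ⊢
      refine ⟨hS.1, hS.2.1, fun hF => hGF ?_⟩
      rw [← hS.2.2, hF]
    have hle3 : (ksets n k).filter (fun S => T ⊆ S ∧ ¬ (f S T = F T)) ⊆
        Δfin ∩ kcol n k T := by
      intro S hS
      rw [Finset.mem_filter] at hS
      obtain ⟨hSk, hTS, hne⟩ := hS
      rw [Finset.mem_inter]
      constructor
      · rw [hΔdef, Finset.mem_filter]
        refine ⟨hSk, ?_⟩
        intro hall
        exact hne (hall T hTS hTcard)
      · rw [kcol, Finset.mem_filter]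
        exact ⟨hSk, hTS⟩
    have c1 := Finset.card_le_card hle2
    have c2 := Finset.card_le_card hle3
    rw [he1, he2] at hsplit
    omega
  have hcore := core hd h2dk h2kn Δfin M hMcards hMA
  have hC1 : (ksets n k).filter (fun S => ¬ ∀ T ⊆ S, T.card = d → f S T = G T) ⊆
      Δfin ∪ (ksets n k).filter (fun S => ∃ T ∈ M, T ⊆ S) := by
    intro S hS
    obtain ⟨hSk, hnall⟩ := Finset.mem_filter.mp hS
    by_cases hSΔ : S ∈ Δfin
    · exact Finset.mem_union_left _ hSΔ
    · have hall : ∀ T ⊆ S, T.card = d → f S T = F T := by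
        rw [hΔdef, Finset.mem_filter, not_and, not_not] at hSΔ
        exact hSΔ hSk
      push_neg at hnall
      obtain ⟨T, hTS, hTd, hne⟩ := hnall
      refine Finset.mem_union_right _ (Finset.mem_filter.mpr ⟨hSk, T, ?_, hTS⟩)
      refine Finset.mem_filter.mpr
        ⟨Finset.mem_powersetCard.mpr ⟨Finset.subset_univ _, hTd⟩, ?_⟩
      intro hGFT
      exact hne (by rw [hall T hTS hTd, hGFT])
  have hnat : ((ksets n k).filter (fun S => ¬ ∀ T ⊆ S, T.card = d → f S T = G T)).card ≤
      (4 * (1 + 2^(3*d+2)) + 1) * Δfin.card := by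
    have ha := Finset.card_le_card hC1
    have hb := Finset.card_union_le Δfin ((ksets n k).filter (fun S => ∃ T ∈ M, T ⊆ S))
    calc ((ksets n k).filter (fun S => ¬ ∀ T ⊆ S, T.card = d → f S T = G T)).card
        ≤ Δfin.card + ((ksets n k).filter (fun S => ∃ T ∈ M, T ⊆ S)).card := by omega
      _ ≤ Δfin.card + 4 * (1 + 2^(3*d+2)) * Δfin.card := by omega
      _ = (4 * (1 + 2^(3*d+2)) + 1) * Δfin.card := by ring
  have hreal : (((ksets n k).filter
      (fun S => ¬ ∀ T ⊆ S, T.card = d → f S T = G T)).card : ℝ) ≤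
      ((4 * (1 + 2^(3*d+2)) + 1 : ℕ) : ℝ) * (Δfin.card : ℝ) := by
    exact_mod_cast hnat
  have hKnn : (0:ℝ) ≤ ((4 * (1 + 2^(3*d+2)) + 1 : ℕ) : ℝ) := by positivity
  calc (((ksets n k).filter
      (fun S => ¬ ∀ T ⊆ S, T.card = d → f S T = G T)).card : ℝ)
      ≤ ((4 * (1 + 2^(3*d+2)) + 1 : ℕ) : ℝ) * (Δfin.card : ℝ) := hreal
    _ = ((4 * (1 + 2^(3*d+2)) + 1 : ℕ) : ℝ) * (δ * ((ksets n k).card : ℝ)) := by rw [hδ]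
    _ ≤ ((4 * (1 + 2^(3*d+2)) + 1 : ℕ) : ℝ) * ((ε + δ) * ((ksets n k).card : ℝ)) := by
        apply mul_le_mul_of_nonneg_left _ hKnn
        nlinarith
    _ = ((4 * (1 + 2^(3*d+2)) + 1 : ℕ) : ℝ) * (ε + δ) * ((ksets n k).card : ℝ) := by ring
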